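/- Let μ > 0, M ∈ ℝ, and let A_M be the diffusion wave. Then for all ξ ∈ ℝ, μ A_M'''(ξ) + (1/2) d/dξ(ξ A_M'(ξ)) − d/dξ(A_M(ξ) A_M'(ξ)) = −(1/2) A_M'(ξ); that is, A_M' is an eigenfunction of the linearization A_μ^M of the rescaled Burgers equation about A_M, with eigenvalue −1/2. -/

import Mathlib

open MeasureTheory

/-- The diffusion wave `A_M` with viscosity `μ` and mass `M`:
`A_M(ξ) = α₀ e^{−ξ²/(4μ)} / (1 − (α₀/(2μ)) ∫_{−∞}^ξ e^{−η²/(4μ)} dη)` with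
`α₀ = √(μ/π)(1 − e^{−M/(2μ)})`. -/
noncomputable def AM (μ M ξ : ℝ) : ℝ :=
  Real.sqrt (μ / Real.pi) * (1 - Real.exp (-M / (2 * μ))) * Real.exp (-ξ ^ 2 / (4 * μ)) /
    (1 - Real.sqrt (μ / Real.pi) * (1 - Real.exp (-M / (2 * μ))) / (2 * μ) *
      ∫ η in Set.Iio ξ, Real.exp (-η ^ 2 / (4 * μ)))

/-- First derivative of `AM` (as given by the Riccati-type ODE it satisfies). -/
noncomputable def D1 (μ M x : ℝ) : ℝ := ((AM μ M x) ^ 2 - x * AM μ M x) / (2 * μ)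

/-- Second derivative of `AM`. -/
noncomputable def D2 (μ M x : ℝ) : ℝ :=
  (2 * AM μ M x * D1 μ M x - AM μ M x - x * D1 μ M x) / (2 * μ)

/-- Third derivative of `AM`. -/
noncomputable def D3 (μ M x : ℝ) : ℝ :=
  (2 * D1 μ M x * D1 μ M x + 2 * AM μ M x * D2 μ M x - 2 * D1 μ M x - x * D2 μ M x) / (2 * μ)

lemma gauss_integrable {μ : ℝ} (hμ : 0 < μ) :
    Integrable (fun x : ℝ => Real.exp (-x ^ 2 / (4 * μ))) := by
  have h : (0 : ℝ) < 1 / (4 * μ) := by positivity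
  have := integrable_exp_neg_mul_sq h
  refine this.congr ?_
  filter_upwards with x
  congr 1
  ring

lemma gauss_total {μ : ℝ} (hμ : 0 < μ) :
    ∫ x : ℝ, Real.exp (-x ^ 2 / (4 * μ)) = Real.sqrt (4 * μ * Real.pi) := by
  have h : (fun x : ℝ => Real.exp (-x ^ 2 / (4 * μ)))
      = fun x : ℝ => Real.exp (-(1 / (4 * μ)) * x ^ 2) := by
    funext x; congr 1; ring
  rw [h, integral_gaussian]
  congr 1
  field_simp

/-- The denominator of `AM` is positive. -/
lemma gpos {μ M : ℝ} (hμ : 0 < μ) (ξ : ℝ) :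
    0 < 1 - Real.sqrt (μ / Real.pi) * (1 - Real.exp (-M / (2 * μ))) / (2 * μ) *
      ∫ η in Set.Iio ξ, Real.exp (-η ^ 2 / (4 * μ)) := by
  set a := Real.sqrt (μ / Real.pi) * (1 - Real.exp (-M / (2 * μ))) with ha
  set f := fun x : ℝ => Real.exp (-x ^ 2 / (4 * μ)) with hf
  have hfint : Integrable f := gauss_integrable hμ
  have hfnn : ∀ x, 0 ≤ f x := fun x => (Real.exp_pos _).le
  have hInn : 0 ≤ ∫ η in Set.Iio ξ, f η :=
    setIntegral_nonneg measurableSet_Iio fun x _ => hfnn x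
  have hIle : (∫ η in Set.Iio ξ, f η) ≤ ∫ x, f x :=
    setIntegral_le_integral hfint (Filter.Eventually.of_forall hfnn)
  rcases le_or_gt a 0 with hle | hpos
  · have h1 : a / (2 * μ) ≤ 0 := div_nonpos_of_nonpos_of_nonneg hle (by positivity)
    have : a / (2 * μ) * ∫ η in Set.Iio ξ, f η ≤ 0 := mul_nonpos_of_nonpos_of_nonneg h1 hInn
    linarith
  · have hc : 0 < a / (2 * μ) := by positivity
    have key : a / (2 * μ) * ∫ x, f x = 1 - Real.exp (-M / (2 * μ)) := by
      rw [hf, gauss_total hμ, ha]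
      have hs : Real.sqrt (μ / Real.pi) * Real.sqrt (4 * μ * Real.pi) = 2 * μ := by
        rw [← Real.sqrt_mul (by positivity)]
        have h4 : μ / Real.pi * (4 * μ * Real.pi) = (2 * μ) ^ 2 := by
          field_simp
          ring
        rw [h4, Real.sqrt_sq (by positivity)]
      have hrw : Real.sqrt (μ / Real.pi) * (1 - Real.exp (-M / (2 * μ))) / (2 * μ) *
          Real.sqrt (4 * μ * Real.pi)
          = Real.sqrt (μ / Real.pi) * Real.sqrt (4 * μ * Real.pi)
            * (1 - Real.exp (-M / (2 * μ))) / (2 * μ) := by ring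
      rw [hrw, hs]
      field_simp
    have h2 : a / (2 * μ) * ∫ η in Set.Iio ξ, f η ≤ 1 - Real.exp (-M / (2 * μ)) := by
      rw [← key]
      exact mul_le_mul_of_nonneg_left hIle hc.le
    have h3 : 0 < Real.exp (-M / (2 * μ)) := Real.exp_pos _
    linarith

/-- `AM` satisfies the Riccati-type ODE `A' = (A² − ξA)/(2μ)`. -/
lemma hasDerivAt_AM {μ : ℝ} (M : ℝ) (hμ : 0 < μ) (ξ : ℝ) :
    HasDerivAt (AM μ M) (D1 μ M ξ) ξ := by
  set a := Real.sqrt (μ / Real.pi) * (1 - Real.exp (-M / (2 * μ))) with ha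
  set f := fun x : ℝ => Real.exp (-x ^ 2 / (4 * μ)) with hf
  have hfint : Integrable f := gauss_integrable hμ
  have hfc : Continuous f := by fun_prop
  -- derivative of f
  have hfd : HasDerivAt f (-ξ / (2 * μ) * f ξ) ξ := by
    have h1 : HasDerivAt (fun x : ℝ => -x ^ 2 / (4 * μ)) (-ξ / (2 * μ)) ξ := by
      have := ((hasDerivAt_pow 2 ξ).neg).div_const (4 * μ)
      refine this.congr_deriv ?_
      field_simp
      ring
    have := h1.exp
    simpa [hf, mul_comm] using this
  -- derivative of the integral
  have hI : HasDerivAt (fun x => ∫ η in Set.Iio x, f η) (f ξ) ξ := by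
    have hrepr : (fun x => ∫ η in Set.Iio x, f η)
        = fun x => (∫ η in Set.Iic (0 : ℝ), f η) + ∫ η in (0 : ℝ)..x, f η := by
      funext x
      rw [← MeasureTheory.integral_Iic_eq_integral_Iio,
        ← intervalIntegral.integral_Iic_sub_Iic hfint.integrableOn hfint.integrableOn]
      ring
    rw [hrepr]
    exact (intervalIntegral.integral_hasDerivAt_right
      hfint.intervalIntegrable
      (hfc.stronglyMeasurableAtFilter _ _) hfc.continuousAt).const_add _
  -- derivative of the denominator
  have hg : HasDerivAt (fun x => 1 - a / (2 * μ) * ∫ η in Set.Iio x, f η)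
      (-(a / (2 * μ) * f ξ)) ξ := (hI.const_mul (a / (2 * μ))).const_sub 1
  have hgpos : ∀ x, 0 < 1 - a / (2 * μ) * ∫ η in Set.Iio x, f η := fun x => gpos hμ x
  have hq := ((hfd.const_mul a).div hg (hgpos ξ).ne')
  have hAMeq : AM μ M = fun x => a * f x / (1 - a / (2 * μ) * ∫ η in Set.Iio x, f η) := rfl
  rw [hAMeq]
  have hgne := (hgpos ξ).ne'
  have hAMξ : AM μ M ξ = a * f ξ / (1 - a / (2 * μ) * ∫ η in Set.Iio ξ, f η) := rfl
  refine hq.congr_deriv ?_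
  rw [D1, hAMξ]
  set G := 1 - a / (2 * μ) * ∫ η in Set.Iio ξ, f η with hG
  have hGne : G ≠ 0 := hgne
  clear_value G
  clear_value a
  field_simp
  ring

lemma hasDerivAt_D1 {μ : ℝ} (M : ℝ) (hμ : 0 < μ) (ξ : ℝ) :
    HasDerivAt (D1 μ M) (D2 μ M ξ) ξ := by
  have hA := hasDerivAt_AM M hμ
  have h : HasDerivAt (fun x => ((AM μ M x) ^ 2 - x * AM μ M x) / (2 * μ))
      ((2 * AM μ M ξ ^ 1 * D1 μ M ξ - (1 * AM μ M ξ + ξ * D1 μ M ξ)) / (2 * μ)) ξ :=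
    (((hA ξ).pow 2).sub ((hasDerivAt_id' ξ).mul (hA ξ))).div_const (2 * μ)
  have : D1 μ M = fun x => ((AM μ M x) ^ 2 - x * AM μ M x) / (2 * μ) := rfl
  rw [this]
  convert h using 1
  rw [D2]
  ring

lemma hasDerivAt_D2 {μ : ℝ} (M : ℝ) (hμ : 0 < μ) (ξ : ℝ) :
    HasDerivAt (D2 μ M) (D3 μ M ξ) ξ := by
  have hA := hasDerivAt_AM M hμ
  have hD1 := hasDerivAt_D1 M hμ
  have h : HasDerivAt
      (fun x => (2 * AM μ M x * D1 μ M x - AM μ M x - x * D1 μ M x) / (2 * μ))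
      ((((2 * D1 μ M ξ) * D1 μ M ξ + (2 * AM μ M ξ) * D2 μ M ξ) - D1 μ M ξ
          - (1 * D1 μ M ξ + ξ * D2 μ M ξ)) / (2 * μ)) ξ :=
    (((((hA ξ).const_mul 2).mul (hD1 ξ)).sub (hA ξ)).sub
      ((hasDerivAt_id' ξ).mul (hD1 ξ))).div_const (2 * μ)
  have : D2 μ M = fun x =>
      (2 * AM μ M x * D1 μ M x - AM μ M x - x * D1 μ M x) / (2 * μ) := rfl
  rw [this]
  convert h using 1
  rw [D3]
  ring

/-- `A_M'` is an eigenfunction of the linearization `A_μ^M` of the rescaled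
Burgers equation about `A_M`, with eigenvalue `−1/2`:
`μ A_M''' + (1/2)(ξ A_M')' − (A_M A_M')' = −(1/2) A_M'`. -/
theorem stmt8 (μ M : ℝ) (hμ : 0 < μ) :
    ∀ ξ : ℝ,
      μ * deriv (deriv (deriv (AM μ M))) ξ
          + 1 / 2 * deriv (fun x => x * deriv (AM μ M) x) ξ
          - deriv (fun x => AM μ M x * deriv (AM μ M) x) ξ
        = -(1 / 2) * deriv (AM μ M) ξ := by
  intro ξ
  have hA := hasDerivAt_AM M hμ
  have hD1 := hasDerivAt_D1 M hμ
  have hD2 := hasDerivAt_D2 M hμ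
  have e1 : deriv (AM μ M) = D1 μ M := funext fun x => (hA x).deriv
  have e2 : deriv (D1 μ M) = D2 μ M := funext fun x => (hD1 x).deriv
  have e3 : deriv (D2 μ M) ξ = D3 μ M ξ := (hD2 ξ).deriv
  rw [e1, e2, e3]
  have e4 : deriv (fun x => x * D1 μ M x) ξ = 1 * D1 μ M ξ + ξ * D2 μ M ξ :=
    ((hasDerivAt_id' ξ).mul (hD1 ξ)).deriv
  have e5 : deriv (fun x => AM μ M x * D1 μ M x) ξ
      = D1 μ M ξ * D1 μ M ξ + AM μ M ξ * D2 μ M ξ := ((hA ξ).mul (hD1 ξ)).deriv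
  rw [e4, e5, D3]
  field_simp
  ring
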